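/- arXiv:1511.08964 — 3 statements merged into one kernel-verified Lean document; each statement's English description precedes it below -/
import Mathlib

section
/- Let B be a Hom-finite Krull-Schmidt R-category and C a full additive subcategory closed under direct summands. If f : M → N is a right almost split morphism in B and N has no nonzero direct summand in C, then the image f̃ : M → N of f in the factor category B/C is right almost split in B/C. -/
open CategoryTheory Limits ZeroObject

/-- The hom-relation on `B` identifying morphisms that differ by a morphism factoring
through an object of the subcategory given by the predicate `P`. The factor category
`B/C` is the category-theoretic quotient by this relation. -/
def factorRel {B : Type} [Category B] [Preadditive B] (P : B → Prop) : HomRel B :=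
  fun {M N} f g => ∃ Z : B, P Z ∧ ∃ (u : M ⟶ Z) (v : Z ⟶ N), f = g + u ≫ v

/-- If two morphisms become equal in the quotient by `factorRel P`, then either they are
equal or they are related by `factorRel P`. -/
lemma factorRel_of_map_eq {B : Type} [Category B] [Preadditive B] [HasBinaryBiproducts B]
    (P : B → Prop) (hCadd : ∀ X Y : B, P X → P Y → P (X ⊞ Y))
    {M N : B} {f g : M ⟶ N}
    (h : (Quotient.functor (factorRel P)).map f = (Quotient.functor (factorRel P)).map g) :
    f = g ∨ factorRel P f g := by
  have h' : Relation.EqvGen (@HomRel.CompClosure B _ (factorRel P) M N) f g :=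
    Quot.eqvGen_exact h
  clear h
  induction h' with
  | rel x y hxy =>
      obtain ⟨_, _, a, m₁, m₂, b, Z, hZ, u, v, huv⟩ := hxy
      right
      refine ⟨Z, hZ, a ≫ u, v ≫ b, ?_⟩
      rw [huv]
      simp [Preadditive.add_comp, Preadditive.comp_add]
  | refl x => left; rfl
  | symm x y _ ih =>
      rcases ih with rfl | ⟨Z, hZ, u, v, huv⟩
      · left; rfl
      · right
        refine ⟨Z, hZ, -u, v, ?_⟩
        rw [huv]; simp
  | trans x y z _ _ ih₁ ih₂ =>
      rcases ih₁ with rfl | ⟨Z₁, hZ₁, u₁, v₁, h₁⟩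
      · exact ih₂
      rcases ih₂ with rfl | ⟨Z₂, hZ₂, u₂, v₂, h₂⟩
      · right; exact ⟨Z₁, hZ₁, u₁, v₁, h₁⟩
      right
      refine ⟨Z₁ ⊞ Z₂, hCadd _ _ hZ₁ hZ₂, biprod.lift u₁ u₂, biprod.desc v₁ v₂, ?_⟩
      rw [biprod.lift_desc, h₁, h₂]
      abel

/-- Let `B` be a Hom-finite Krull-Schmidt `R`-category and `C` a full additive subcategory
closed under direct summands. If `f : M ⟶ N` is right almost split in `B` and `N` has no
nonzero direct summand in `C`, then the image of `f` in the factor category `B/C` is right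
almost split. -/
theorem stmt4 (R : Type) [CommRing R] [IsArtinianRing R]
    (B : Type) [Category B] [Preadditive B] [Linear R B] [HasZeroObject B]
    [HasBinaryBiproducts B] [IsIdempotentComplete B]
    (hHomFinite : ∀ X Y : B, Module.Finite R (X ⟶ Y))
    (P : B → Prop)
    (hCsum : ∀ (X Y : B) (i : X ⟶ Y) (r : Y ⟶ X), i ≫ r = 𝟙 X → P Y → P X)
    (hCadd : ∀ X Y : B, P X → P Y → P (X ⊞ Y))
    (M N : B) (f : M ⟶ N)
    -- `f` is right almost split in `B`
    (hnotretr : ¬ ∃ s : N ⟶ M, s ≫ f = 𝟙 N)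
    (halmost : ∀ (L : B) (g : L ⟶ N), (¬ ∃ s : N ⟶ L, s ≫ g = 𝟙 N) → ∃ t : L ⟶ M, t ≫ f = g)
    -- `N` has no nonzero direct summand in `C`
    (hN : ∀ (W N'' : B) (_ : N ≅ W ⊞ N''), P W → IsZero W) :
    (¬ ∃ s : (Quotient.functor (factorRel P)).obj N ⟶ (Quotient.functor (factorRel P)).obj M,
      s ≫ (Quotient.functor (factorRel P)).map f = 𝟙 ((Quotient.functor (factorRel P)).obj N)) ∧
    (∀ (L : B) (g : (Quotient.functor (factorRel P)).obj L ⟶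
        (Quotient.functor (factorRel P)).obj N),
      (¬ ∃ s : (Quotient.functor (factorRel P)).obj N ⟶ (Quotient.functor (factorRel P)).obj L,
        s ≫ g = 𝟙 ((Quotient.functor (factorRel P)).obj N)) →
      ∃ t : (Quotient.functor (factorRel P)).obj L ⟶ (Quotient.functor (factorRel P)).obj M,
        t ≫ (Quotient.functor (factorRel P)).map f = g) := by
  set Q := Quotient.functor (factorRel P) with hQ
  constructor
  · rintro ⟨s, hs⟩
    obtain ⟨s₀, rfl⟩ := Q.map_surjective s
    rw [← Q.map_comp] at hs
    have hs' : Q.map (s₀ ≫ f) = Q.map (𝟙 N) := by rw [hs, Q.map_id]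
    rcases factorRel_of_map_eq P hCadd hs' with h | ⟨Z, hZ, u, v, huv⟩
    · exact hnotretr ⟨s₀, h⟩
    · -- huv : s₀ ≫ f = 𝟙 N + u ≫ v
      by_cases hv : ∃ w : N ⟶ Z, w ≫ v = 𝟙 N
      · obtain ⟨w, hw⟩ := hv
        have hPN : P N := hCsum N Z w v hw hZ
        have e : N ≅ N ⊞ (0 : B) :=
          { hom := biprod.lift (𝟙 N) 0
            inv := biprod.fst
            hom_inv_id := by simp
            inv_hom_id := by
              apply biprod.hom_ext
              · simp
              · exact (isZero_zero B).eq_of_tgt _ _ }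
        have hzero : IsZero N := hN N 0 e hPN
        exact hnotretr ⟨0, by rw [Limits.zero_comp]; exact hzero.eq_of_src _ _⟩
      · obtain ⟨t, ht⟩ := halmost Z v hv
        refine hnotretr ⟨s₀ - u ≫ t, ?_⟩
        rw [Preadditive.sub_comp, huv, Category.assoc, ht]
        abel
  · intro L g hg
    obtain ⟨g₀, rfl⟩ := Q.map_surjective g
    have hng : ¬ ∃ s : N ⟶ L, s ≫ g₀ = 𝟙 N := by
      rintro ⟨s, hs⟩
      exact hg ⟨Q.map s, by rw [← Q.map_comp, hs, Q.map_id]⟩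
    obtain ⟨t, ht⟩ := halmost L g₀ hng
    exact ⟨Q.map t, by rw [← Q.map_comp, ht]⟩
end

section
/- A bounded cochain complex X of modules over a ring A is a projective object in the category of bounded cochain complexes of A-modules if and only if X is contractible (homotopy equivalent to the zero complex, equivalently split exact) and each term X^n is a projective A-module. -/
open CategoryTheory Limits

/-- A bounded cochain complex: only finitely many nonzero terms. -/
def IsBoundedComplex {A : Type} [Ring A] (X : CochainComplex (ModuleCat A) ℤ) : Prop :=
  ∃ a b : ℤ, ∀ n : ℤ, (n < a ∨ b < n) → IsZero (X.X n)

namespace StmtAux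

open HomologicalComplex

variable {A : Type} [Ring A]

lemma isZero_biprod {C : Type*} [Category C] [Preadditive C] {P Q : C} [HasBinaryBiproduct P Q]
    (hP : IsZero P) (hQ : IsZero Q) : IsZero (P ⊞ Q) := by
  rw [IsZero.iff_id_eq_zero, ← biprod.total,
    hP.eq_of_tgt biprod.fst 0, hQ.eq_of_tgt biprod.snd 0]
  simp

lemma epi_of_degreewise {K L : CochainComplex (ModuleCat A) ℤ} (φ : K ⟶ L)
    (h : ∀ n, Epi (φ.f n)) : Epi φ := by
  constructor
  intro Z u v huv
  refine HomologicalComplex.hom_ext _ _ fun n => ?_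
  have h2 := congr_arg (fun ψ => HomologicalComplex.Hom.f ψ n) huv
  simp only [HomologicalComplex.comp_f] at h2
  haveI := h n
  exact (cancel_epi (φ.f n)).1 h2

lemma epi_sub {K L : ObjectProperty.FullSubcategory (IsBoundedComplex (A := A))} (φ : K ⟶ L)
    (h : Epi φ.hom) : Epi φ := by
  constructor
  intro Z u v huv
  exact InducedCategory.hom_ext ((cancel_epi φ.hom).1 (congrArg InducedCategory.Hom.hom huv))

/-- The contractible cover complex: `K(Y)ⁿ = Yⁿ⁻¹ ⊞ Yⁿ`, `d (x,y) = (y, 0)`. -/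
noncomputable def coverK (Y : CochainComplex (ModuleCat A) ℤ) :
    CochainComplex (ModuleCat A) ℤ where
  X i := Y.X (i - 1) ⊞ Y.X i
  d i j := if h : i + 1 = j then
      biprod.snd ≫ (Y.XIsoOfEq (show i = j - 1 by omega)).hom ≫ biprod.inl else 0
  shape i j h := dif_neg h
  d_comp_d' i j k hij hjk := by
    rw [dif_pos (show i + 1 = j from hij), dif_pos (show j + 1 = k from hjk)]
    simp

attribute [reducible] coverK

lemma coverK_d (Y : CochainComplex (ModuleCat A) ℤ) (i j : ℤ) (h : i + 1 = j) :
    (coverK Y).d i j =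
      biprod.snd ≫ (Y.XIsoOfEq (show i = j - 1 by omega)).hom ≫ biprod.inl :=
  dif_pos h

/-- The canonical epimorphism `coverK Y ⟶ Y`, `(x,y) ↦ dx + y`. -/
noncomputable def coverKπ (Y : CochainComplex (ModuleCat A) ℤ) : coverK Y ⟶ Y where
  f i := biprod.desc (Y.d (i - 1) i) (𝟙 _)
  comm' i j hij := by
    rw [coverK_d Y i j hij]
    apply biprod.hom_ext' <;> simp [XIsoOfEq_hom_comp_d]

instance (Y : CochainComplex (ModuleCat A) ℤ) (i : ℤ) : Epi ((coverKπ Y).f i) := by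
  have : biprod.inr ≫ (coverKπ Y).f i = 𝟙 _ := biprod.inr_desc _ _
  exact epi_of_epi_fac this

/-- `coverK Y` is contractible. -/
noncomputable def coverKHomotopy (Y : CochainComplex (ModuleCat A) ℤ) :
    Homotopy (𝟙 (coverK Y)) 0 where
  hom i j := if h : j + 1 = i then
      biprod.fst ≫ (Y.XIsoOfEq (show i - 1 = j by omega)).hom ≫ biprod.inr else 0
  zero i j h := dif_neg h
  comm i := by
    rw [dNext_eq _ (show (ComplexShape.up ℤ).Rel i (i + 1) from rfl),
      prevD_eq _ (show (ComplexShape.up ℤ).Rel (i - 1) i by simp)]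
    rw [coverK_d Y i (i + 1) rfl, coverK_d Y (i - 1) i (by omega),
      dif_pos rfl, dif_pos (show (i - 1) + 1 = i by omega)]
    apply biprod.hom_ext' <;>
      simp [coverK, XIsoOfEq_hom_comp_XIsoOfEq_hom, biprod.total]

lemma coverK_bounded {Y : CochainComplex (ModuleCat A) ℤ} (h : IsBoundedComplex Y) :
    IsBoundedComplex (coverK Y) := by
  obtain ⟨a, b, hab⟩ := h
  exact ⟨a, b + 1, fun n hn => isZero_biprod (hab _ (by omega)) (hab _ (by omega))⟩

/-- Functoriality of `coverK`. -/
noncomputable def coverKmap {Y Z : CochainComplex (ModuleCat A) ℤ} (φ : Y ⟶ Z) :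
    coverK Y ⟶ coverK Z where
  f i := biprod.map (φ.f (i - 1)) (φ.f i)
  comm' i j hij := by
    have hij' : i + 1 = j := hij
    rw [coverK_d Y i j hij', coverK_d Z i j hij']
    apply biprod.hom_ext'
    · simp
    · simp only [Category.assoc, biprod.map_snd, biprod.map_snd_assoc,
        biprod.inr_snd_assoc, biprod.inl_map]
      rw [← Category.assoc, XIsoOfEq_hom_naturality φ (show i = j - 1 by omega),
        Category.assoc]

instance {Y Z : CochainComplex (ModuleCat A) ℤ} (φ : Y ⟶ Z) (i : ℤ)
    [∀ n, Epi (φ.f n)] : Epi ((coverKmap φ).f i) := by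
  dsimp [coverKmap]
  infer_instance

/-- The disk complex with `N` placed in degrees `n - 1` and `n`. -/
noncomputable def disk (n : ℤ) (N : ModuleCat A) : CochainComplex (ModuleCat A) ℤ :=
  coverK ((HomologicalComplex.single (ModuleCat A) (ComplexShape.up ℤ) (n - 1)).obj N)

lemma disk_bounded (n : ℤ) (N : ModuleCat A) : IsBoundedComplex (disk n N) :=
  coverK_bounded ⟨n - 1, n - 1, fun i hi =>
    HomologicalComplex.isZero_single_obj_X _ _ _ _ (by omega)⟩

attribute [reducible] disk

/-- Functoriality of the disk. -/
noncomputable def diskMap (n : ℤ) {M N : ModuleCat A} (g : M ⟶ N) : disk n M ⟶ disk n N :=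
  coverKmap ((HomologicalComplex.single (ModuleCat A) (ComplexShape.up ℤ) (n - 1)).map g)

instance (n : ℤ) {M N : ModuleCat A} (g : M ⟶ N) [Epi g] (i : ℤ) :
    Epi (((HomologicalComplex.single (ModuleCat A) (ComplexShape.up ℤ) (n - 1)).map g).f i) := by
  by_cases hi : i = n - 1
  · subst hi
    rw [HomologicalComplex.single_map_f_self]
    infer_instance
  · constructor
    intro Z u v _
    exact (HomologicalComplex.isZero_single_obj_X (ComplexShape.up ℤ) (n - 1) N i hi).eq_of_src u v

instance (n : ℤ) {M N : ModuleCat A} (g : M ⟶ N) [Epi g] (i : ℤ) :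
    Epi ((diskMap n g).f i) := by
  dsimp only [diskMap]
  infer_instance

/-- The chain map `Y ⟶ disk n N` associated to `f : Y.X n ⟶ N`. -/
noncomputable def diskHom (Y : CochainComplex (ModuleCat A) ℤ) (n : ℤ) {N : ModuleCat A}
    (f : Y.X n ⟶ N) : Y ⟶ disk n N where
  f i := biprod.lift
    (if h : i = n then (Y.XIsoOfEq h).hom ≫ f ≫
        (HomologicalComplex.singleObjXSelf (ComplexShape.up ℤ) (n - 1) N).inv ≫
        (((HomologicalComplex.single (ModuleCat A) (ComplexShape.up ℤ) (n - 1)).obj N).XIsoOfEq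
          (show n - 1 = i - 1 by omega)).hom
      else 0)
    (if h : i = n - 1 then (Y.XIsoOfEq h).hom ≫ Y.d (n - 1) n ≫ f ≫
        (HomologicalComplex.singleObjXSelf (ComplexShape.up ℤ) (n - 1) N).inv ≫
        (((HomologicalComplex.single (ModuleCat A) (ComplexShape.up ℤ) (n - 1)).obj N).XIsoOfEq
          (show n - 1 = i by omega)).hom
      else 0)
  comm' i j hij := by
    have hij' : i + 1 = j := hij
    rw [show (disk n N).d i j = _ from coverK_d _ i j hij']
    dsimp only
    apply biprod.hom_ext
    · by_cases hi : i = n - 1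
      · rw [dif_pos hi, dif_pos (show j = n by omega)]
        simp
      · rw [dif_neg hi, dif_neg (show ¬ j = n by omega)]
        simp
    · by_cases hj : j = n - 1
      · rw [dif_pos hj]
        simp
      · rw [dif_neg hj]
        simp

lemma diskHom_f_fst (Y : CochainComplex (ModuleCat A) ℤ) (n : ℤ) {N : ModuleCat A}
    (f : Y.X n ⟶ N) :
    (diskHom Y n f).f n ≫ biprod.fst =
      f ≫ (HomologicalComplex.singleObjXSelf (ComplexShape.up ℤ) (n - 1) N).inv := by
  dsimp only [diskHom]
  rw [biprod.lift_fst, dif_pos rfl]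
  simp

lemma epi_f_of_epi {E Y : ObjectProperty.FullSubcategory (IsBoundedComplex (A := A))} (e : E ⟶ Y) [Epi e]
    (n : ℤ) : Epi (e.hom.f n) := by
  set e' : E.obj ⟶ Y.obj := e.hom with he'
  apply Abelian.epi_of_cokernel_π_eq_zero
  have hQ0 : e' ≫ diskHom Y.obj n (cokernel.π (e'.f n)) = 0 := by
    refine HomologicalComplex.hom_ext _ _ fun i => ?_
    simp only [HomologicalComplex.comp_f, HomologicalComplex.zero_f]
    dsimp only [diskHom]
    apply biprod.hom_ext
    · simp only [Category.assoc, biprod.lift_fst, zero_comp]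
      by_cases hi : i = n
      · subst hi
        rw [dif_pos rfl]
        simp [cokernel.condition_assoc]
      · rw [dif_neg hi]
        simp
    · simp only [Category.assoc, biprod.lift_snd, zero_comp]
      by_cases hi : i = n - 1
      · rw [dif_pos hi]
        rw [← Category.assoc, XIsoOfEq_hom_naturality e' hi, Category.assoc,
          HomologicalComplex.Hom.comm_assoc e' (n - 1) n]
        simp [cokernel.condition_assoc]
      · rw [dif_neg hi]
        simp
  have hQ : diskHom Y.obj n (cokernel.π (e'.f n)) = 0 := by
    have h2 : e ≫ (show Y ⟶ (⟨disk n (cokernel (e'.f n)), disk_bounded n _⟩ :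
          ObjectProperty.FullSubcategory (IsBoundedComplex (A := A))) from
            ObjectProperty.homMk (diskHom Y.obj n (cokernel.π (e'.f n)))) =
        e ≫ (show Y ⟶ ⟨disk n (cokernel (e'.f n)), disk_bounded n _⟩ from ObjectProperty.homMk 0) := by
      apply InducedCategory.hom_ext
      show e' ≫ diskHom Y.obj n (cokernel.π (e'.f n)) =
        e' ≫ (0 : Y.obj ⟶ disk n (cokernel (e'.f n)))
      rw [hQ0, comp_zero]
    exact congrArg InducedCategory.Hom.hom ((cancel_epi e).1 h2)
  have h4 := congr_arg (fun ψ : Y.obj ⟶ disk n (cokernel (e'.f n)) =>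
    HomologicalComplex.Hom.f ψ n ≫ biprod.fst) hQ
  dsimp only at h4
  rw [diskHom_f_fst, HomologicalComplex.zero_f, zero_comp] at h4
  exact (cancel_mono (HomologicalComplex.singleObjXSelf (ComplexShape.up ℤ) (n - 1)
    (cokernel (e'.f n))).inv).1 (by simpa using h4)

/-- The lifting construction: a contractible complex of projectives lifts against
degreewise epimorphisms. -/
noncomputable def liftOfHomotopy {Xc E Y : CochainComplex (ModuleCat A) ℤ}
    (f : Xc ⟶ Y) (e : E ⟶ Y) [he : ∀ n, Epi (e.f n)]
    (hty : Homotopy (𝟙 Xc) 0) (hp : ∀ n, Projective (Xc.X n)) :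
    {l : Xc ⟶ E // l ≫ e = f} := by
  haveI := hp
  let t : ∀ n, Xc.X n ⟶ E.X n := fun n => Projective.factorThru (f.f n) (e.f n)
  have ht : ∀ n, t n ≫ e.f n = f.f n := fun n => Projective.factorThru_comp _ _
  have key : ∀ (n m m' : ℤ) (h : m = m'),
      hty.hom n m ≫ t m ≫ E.d m n = hty.hom n m' ≫ t m' ≫ E.d m' n := by
    rintro n m m' rfl; rfl
  refine ⟨⟨fun n => hty.hom n (n - 1) ≫ t (n - 1) ≫ E.d (n - 1) n +
      Xc.d n (n + 1) ≫ hty.hom (n + 1) n ≫ t n, ?_⟩, ?_⟩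
  · intro i j hij
    obtain rfl : j = i + 1 := (show i + 1 = j from hij).symm
    simp only [Preadditive.add_comp, Preadditive.comp_add, Category.assoc,
      HomologicalComplex.d_comp_d, comp_zero, zero_add,
      HomologicalComplex.d_comp_d_assoc, zero_comp, add_zero]
    rw [key (i + 1) (i + 1 - 1) i (by omega)]
  · refine HomologicalComplex.hom_ext _ _ fun n => ?_
    have hcomm : Xc.d n (n + 1) ≫ hty.hom (n + 1) n + hty.hom n (n - 1) ≫ Xc.d (n - 1) n =
        𝟙 (Xc.X n) := by
      have h5 := hty.comm n
      rw [dNext_eq _ (show (ComplexShape.up ℤ).Rel n (n + 1) from rfl),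
        prevD_eq _ (show (ComplexShape.up ℤ).Rel (n - 1) n by simp)] at h5
      simpa using h5.symm
    have hmain : (hty.hom n (n - 1) ≫ Xc.d (n - 1) n) ≫ f.f n +
        (Xc.d n (n + 1) ≫ hty.hom (n + 1) n) ≫ f.f n = f.f n := by
      rw [← Preadditive.add_comp, add_comm, hcomm, Category.id_comp]
    simp only [HomologicalComplex.comp_f, Preadditive.add_comp, Category.assoc]
    rw [← HomologicalComplex.Hom.comm e (n - 1) n]
    rw [← Category.assoc (t (n - 1)), ht (n - 1)]
    rw [ht n]
    rw [HomologicalComplex.Hom.comm f (n - 1) n]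
    simpa only [Category.assoc] using hmain

lemma diskMap_f_fst (n : ℤ) {M N : ModuleCat A} (g : M ⟶ N) :
    (diskMap n g).f n ≫ biprod.fst =
      biprod.fst ≫ (HomologicalComplex.singleObjXSelf (ComplexShape.up ℤ) (n - 1) M).hom ≫
        g ≫ (HomologicalComplex.singleObjXSelf (ComplexShape.up ℤ) (n - 1) N).inv := by
  dsimp only [diskMap, coverKmap]
  rw [biprod.map_fst, HomologicalComplex.single_map_f_self]

end StmtAux

open StmtAux in
/-- A bounded cochain complex `X` of `A`-modules is a projective object in the category
`C^b(Mod A)` of bounded cochain complexes iff `X` is contractible and each term is projective. -/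
theorem stmt5 (A : Type) [Ring A]
    (X : ObjectProperty.FullSubcategory (IsBoundedComplex (A := A))) :
    Projective X ↔
      (Nonempty (Homotopy (𝟙 X.obj) 0) ∧ ∀ n : ℤ, Projective (X.obj.X n)) := by
  constructor
  · intro hX
    constructor
    · -- `X` is contractible: it is a retract of the contractible complex `coverK X.obj`
      haveI : Epi (show (⟨coverK X.obj, coverK_bounded X.property⟩ :
          ObjectProperty.FullSubcategory (IsBoundedComplex (A := A))) ⟶ X from ObjectProperty.homMk (coverKπ X.obj)) :=
        epi_sub _ (epi_of_degreewise (coverKπ X.obj) fun n => inferInstance)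
      obtain ⟨σ, hσ⟩ := Projective.factors (𝟙 X)
        (show (⟨coverK X.obj, coverK_bounded X.property⟩ :
          ObjectProperty.FullSubcategory (IsBoundedComplex (A := A))) ⟶ X from ObjectProperty.homMk (coverKπ X.obj))
      have hσ' : σ.hom ≫ coverKπ X.obj = 𝟙 X.obj := congrArg InducedCategory.Hom.hom hσ
      refine ⟨(Homotopy.ofEq ?_).trans
        ((((coverKHomotopy X.obj).compRight (coverKπ X.obj)).compLeft
          σ.hom).trans (Homotopy.ofEq (by simp)))⟩
      rw [Category.id_comp]
      exact hσ'.symm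
    · -- each term is projective
      intro n
      constructor
      intro Em Nm f' e' he'
      haveI : Epi (show (⟨disk n Em, disk_bounded n Em⟩ :
            ObjectProperty.FullSubcategory (IsBoundedComplex (A := A))) ⟶
          ⟨disk n Nm, disk_bounded n Nm⟩ from ObjectProperty.homMk (diskMap n e')) :=
        epi_sub _ (epi_of_degreewise (diskMap n e') fun i => inferInstance)
      obtain ⟨L, hL⟩ := Projective.factors
        (show X ⟶ ⟨disk n Nm, disk_bounded n Nm⟩ from ObjectProperty.homMk (diskHom X.obj n f'))
        (show (⟨disk n Em, disk_bounded n Em⟩ :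
            ObjectProperty.FullSubcategory (IsBoundedComplex (A := A))) ⟶
          ⟨disk n Nm, disk_bounded n Nm⟩ from ObjectProperty.homMk (diskMap n e'))
      refine ⟨L.hom.f n ≫ biprod.fst ≫
        (HomologicalComplex.singleObjXSelf (ComplexShape.up ℤ) (n - 1) Em).hom, ?_⟩
      have hL' : L.hom ≫ diskMap n e' = diskHom X.obj n f' := congrArg InducedCategory.Hom.hom hL
      have h6 := congr_arg (fun ψ : X.obj ⟶ disk n Nm =>
        HomologicalComplex.Hom.f ψ n ≫ biprod.fst) hL'
      dsimp only at h6
      rw [diskHom_f_fst, HomologicalComplex.comp_f, Category.assoc, diskMap_f_fst] at h6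
      refine (cancel_mono
        (HomologicalComplex.singleObjXSelf (ComplexShape.up ℤ) (n - 1) Nm).inv).1 ?_
      simpa only [Category.assoc] using h6
  · rintro ⟨⟨hty⟩, hproj⟩
    constructor
    intro Esub Ysub f e he
    haveI : ∀ m, Epi (e.hom.f m) := fun m => epi_f_of_epi e m
    obtain ⟨l, hl⟩ := liftOfHomotopy f.hom
      e.hom hty hproj
    exact ⟨ObjectProperty.homMk l, InducedCategory.hom_ext hl⟩
end

section
/- A bounded cochain complex X of modules over a ring A is an injective object in the category of bounded cochain complexes of A-modules if and only if X is contractible and each term X^n is an injective A-module. -/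
open CategoryTheory Limits

namespace Stmt6Aux

open ZeroObject HomologicalComplex

variable {A : Type} [Ring A]

abbrev B (A : Type) [Ring A] := ObjectProperty.FullSubcategory (IsBoundedComplex (A := A))

lemma mono_amb_of_mono {Y Z : B A} (f : Y ⟶ Z) [Mono f] :
    Mono f.hom := by
  set F : Y.obj ⟶ Z.obj := f.hom with hF
  have hbd : IsBoundedComplex (kernel F) := by
    obtain ⟨a, b, hab⟩ := Y.property
    exact ⟨a, b, fun n hn => IsZero.of_mono ((kernel.ι F).f n) (hab n hn)⟩
  have hzero : kernel.ι F = 0 := by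
    have : (ObjectProperty.homMk (kernel.ι F) : (⟨kernel F, hbd⟩ : B A) ⟶ Y) ≫ f =
        (ObjectProperty.homMk 0 : (⟨kernel F, hbd⟩ : B A) ⟶ Y) ≫ f := by
      apply ObjectProperty.hom_ext
      show kernel.ι F ≫ F = (0 : kernel F ⟶ Y.obj) ≫ F
      simp
    exact congrArg InducedCategory.Hom.hom ((cancel_mono f).mp this)
  exact Abelian.mono_of_kernel_ι_eq_zero _ hzero

lemma mono_f_of_mono {Y Z : B A} (f : Y ⟶ Z) [Mono f] (n : ℤ) :
    Mono (f.hom.f n) := by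
  haveI := mono_amb_of_mono f
  infer_instance

lemma mono_sub {Y Z : B A} (f : Y ⟶ Z) (h : Mono f.hom) :
    Mono f := by
  constructor
  intro W g g' w
  exact InducedCategory.hom_ext (h.right_cancellation g.hom g'.hom (congrArg InducedCategory.Hom.hom w))


variable (M N : ModuleCat A) (n : ℤ)

/-- The disk complex: `M` in degrees `n` and `n+1` with identity differential. -/
noncomputable def disk : CochainComplex (ModuleCat A) ℤ where
  X i := if i = n ∨ i = n + 1 then M else 0
  d i j :=
    if h : i = n ∧ j = n + 1 then
      (eqToHom (if_pos (Or.inl h.1)) : _ ⟶ M) ≫ eqToHom (if_pos (Or.inr h.2)).symm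
    else 0
  shape i j hij := by
    rw [dif_neg]
    rintro ⟨rfl, rfl⟩
    exact hij (by simp)
  d_comp_d' i j k hij hjk := by
    by_cases h2 : j = n ∧ k = n + 1
    · obtain ⟨rfl, rfl⟩ := h2
      rw [dif_neg (by omega), zero_comp]
    · rw [dif_neg h2, comp_zero]

lemma disk_X (i : ℤ) : (disk (A := A) M n).X i = if i = n ∨ i = n + 1 then M else 0 := rfl

lemma disk_d (i j : ℤ) : (disk (A := A) M n).d i j =
    (if h : i = n ∧ j = n + 1 then
      (eqToHom (if_pos (Or.inl h.1)) : _ ⟶ M) ≫ eqToHom (if_pos (Or.inr h.2)).symm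
    else 0) := rfl

lemma disk_bounded : IsBoundedComplex (disk (A := A) M n) :=
  ⟨n, n + 1, fun i hi => by
    rw [disk_X, if_neg (by omega)]
    exact isZero_zero _⟩

variable {M N n}

/-- A map `M ⟶ Y.X n` induces a chain map `disk M n ⟶ Y`. -/
noncomputable def diskTo {Y : CochainComplex (ModuleCat A) ℤ} (φ : M ⟶ Y.X n) :
    disk M n ⟶ Y where
  f i :=
    if h : i = n then
      eqToHom (show (disk M n).X i = M by rw [disk_X, if_pos (Or.inl h)]) ≫
        φ ≫ eqToHom (by rw [h])
    else if h' : i = n + 1 then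
      eqToHom (show (disk M n).X i = M by rw [disk_X, if_pos (Or.inr h')]) ≫
        φ ≫ Y.d n (n + 1) ≫ eqToHom (by rw [h'])
    else 0
  comm' i j hij := by
    obtain rfl : j = i + 1 := by simpa using hij.symm
    by_cases h : i = n
    · subst h
      rw [dif_pos rfl, dif_neg (by omega), dif_pos rfl]
      rw [disk_d, dif_pos ⟨rfl, rfl⟩]
      simp
      erw [eqToHom_trans_assoc]
    · by_cases h' : i = n + 1
      · subst h'
        rw [dif_neg h, dif_pos rfl, dif_neg (by omega), dif_neg (by omega)]
        rw [disk_d, dif_neg (by omega)]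
        simp
        exact zero_comp.symm
      · rw [dif_neg h, dif_neg h']
        rw [disk_d, dif_neg (by omega)]
        simp
        exact zero_comp.symm

lemma diskTo_f_n {Y : CochainComplex (ModuleCat A) ℤ} (φ : M ⟶ Y.X n) :
    (diskTo φ).f n = eqToHom (show (disk M n).X n = M from by rw [disk_X, if_pos (Or.inl rfl)]) ≫ φ := by
  show dite _ _ _ = _
  rw [dif_pos rfl]
  simp

/-- Functoriality of the disk. -/
noncomputable def diskMap (u : M ⟶ N) : disk (A := A) M n ⟶ disk N n where
  f i :=
    if h : i = n ∨ i = n + 1 then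
      eqToHom (show (disk M n).X i = M from by rw [disk_X, if_pos h]) ≫ u ≫
        eqToHom (show N = (disk N n).X i from by rw [disk_X, if_pos h])
    else 0
  comm' i j hij := by
    obtain rfl : j = i + 1 := by simpa using hij.symm
    by_cases h : i = n
    · subst h
      rw [dif_pos (Or.inl rfl), dif_pos (Or.inr rfl), disk_d, disk_d,
        dif_pos ⟨rfl, rfl⟩, dif_pos ⟨rfl, rfl⟩]
      simp
      erw [Category.assoc, Category.assoc, eqToHom_trans, eqToHom_trans_assoc]
    · rw [disk_d, disk_d, dif_neg (show ¬(i = n ∧ i + 1 = n + 1) from by omega),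
        dif_neg (show ¬(i = n ∧ i + 1 = n + 1) from by omega)]
      exact comp_zero.trans zero_comp.symm

lemma diskMap_mono (u : M ⟶ N) [Mono u] : Mono (diskMap (n := n) u) := by
  apply HomologicalComplex.mono_of_mono_f
  intro i
  by_cases h : i = n ∨ i = n + 1
  · have : (diskMap (n := n) u).f i = eqToHom (if_pos h) ≫ u ≫ eqToHom (if_pos h).symm :=
      dif_pos h
    rw [this]
    exact @mono_comp _ _ _ _ _ _ (@IsIso.mono_of_iso _ _ _ _ _ (CategoryTheory.instIsIsoEqToHom _)) _
      (@mono_comp _ _ _ _ _ _ ‹Mono u› _ (@IsIso.mono_of_iso _ _ _ _ _ (CategoryTheory.instIsIsoEqToHom _)))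
  · constructor
    intro W a b _
    have hz : IsZero ((disk (A := A) M n).X i) := by
      rw [disk_X (A := A) (M := M) (n := n) i, if_neg h]; exact isZero_zero _
    exact hz.eq_of_tgt _ _

lemma injective_term {X : B A} (hI : Injective X) (m : ℤ) : Injective (X.obj.X m) := by
  haveI := hI
  constructor
  intro M N φ u hu
  let DM : B A := ⟨disk M m, disk_bounded M m⟩
  let DN : B A := ⟨disk N m, disk_bounded N m⟩
  let v : DM ⟶ DN := ObjectProperty.homMk (diskMap u)
  haveI : Mono v := mono_sub v (diskMap_mono u)
  obtain ⟨ψ, hψ⟩ := Injective.factors (show DM ⟶ X from ObjectProperty.homMk (diskTo φ)) v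
  let ψ' : disk N m ⟶ X.obj := ψ.hom
  have key : diskMap (n := m) u ≫ ψ' = diskTo φ := congrArg InducedCategory.Hom.hom hψ
  have key2 : (diskMap (n := m) u).f m ≫ ψ'.f m = (diskTo φ).f m := by
    rw [← HomologicalComplex.comp_f, key]
  rw [show (diskMap (n := m) u).f m = _ from dif_pos (Or.inl rfl), diskTo_f_n,
    Category.assoc] at key2
  refine ⟨eqToHom (show N = (disk N m).X m from by rw [disk_X, if_pos (Or.inl rfl)]) ≫
    ψ'.f m, ?_⟩
  rw [← cancel_epi (eqToHom (show (disk M m).X m = M from by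
    rw [disk_X, if_pos (Or.inl rfl)]))]
  rw [← Category.assoc, ← Category.assoc] at key2 ⊢
  exact key2

lemma mono_sub' : True := trivial

lemma injective_of_contractible {X : B A} (h : Homotopy (𝟙 X.obj) 0)
    (hX : ∀ n, Injective (X.obj.X n)) : Injective X := by
  constructor
  intro Y Z g f hf
  set G : Y.obj ⟶ X.obj := g.hom with hG
  set F : Y.obj ⟶ Z.obj := f.hom with hFdef
  haveI : ∀ n, Mono (F.f n) := fun n => mono_f_of_mono f n
  haveI := hX
  let k : ∀ n m : ℤ, Z.obj.X n ⟶ X.obj.X m := fun n m =>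
    Injective.factorThru (G.f n ≫ h.hom n m) (F.f n)
  have hk : ∀ n m, F.f n ≫ k n m = G.f n ≫ h.hom n m := fun n m =>
    Injective.comp_factorThru _ _
  have hcomm : ∀ n : ℤ, 𝟙 (X.obj.X n) =
      X.obj.d n (n + 1) ≫ h.hom (n + 1) n + h.hom n (n - 1) ≫ X.obj.d (n - 1) n := by
    intro n
    have := h.comm n
    rw [dNext_eq h.hom (show (ComplexShape.up ℤ).Rel n (n+1) by simp),
      prevD_eq h.hom (show (ComplexShape.up ℤ).Rel (n-1) n by simp)] at this
    simpa using this
  let Φ : Z.obj ⟶ X.obj :=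
    { f := fun n => k n (n - 1) ≫ X.obj.d (n - 1) n + Z.obj.d n (n + 1) ≫ k (n + 1) n
      comm' := by
        intro i j hij
        obtain rfl : j = i + 1 := by simpa using hij.symm
        simp only [Preadditive.add_comp, Preadditive.comp_add, Category.assoc,
          d_comp_d, comp_zero, zero_add,
          d_comp_d_assoc, zero_comp, add_zero]
        rw [show i + 1 - 1 = i from by omega] }
  have hfac : F ≫ Φ = G := by
    apply HomologicalComplex.hom_ext; intro n
    have e1 : F.f n ≫ Z.obj.d n (n + 1) = Y.obj.d n (n + 1) ≫ F.f (n + 1) := F.comm n (n + 1)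
    have e2 : G.f n ≫ X.obj.d n (n + 1) = Y.obj.d n (n + 1) ≫ G.f (n + 1) := G.comm n (n + 1)
    calc (F ≫ Φ).f n = (F.f n ≫ k n (n - 1)) ≫ X.obj.d (n - 1) n +
          (F.f n ≫ Z.obj.d n (n + 1)) ≫ k (n + 1) n := by
            simp [Φ, Preadditive.comp_add, Category.assoc]
      _ = (G.f n ≫ h.hom n (n - 1)) ≫ X.obj.d (n - 1) n +
          (Y.obj.d n (n + 1) ≫ F.f (n + 1)) ≫ k (n + 1) n := by rw [hk, e1]
      _ = G.f n := by
            simp only [Category.assoc, hk]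
            rw [← HomologicalComplex.Hom.comm_assoc G n (n + 1), ← Preadditive.comp_add,
              add_comm (h.hom n (n - 1) ≫ X.obj.d (n - 1) n), ← hcomm n, Category.comp_id]
  exact ⟨ObjectProperty.homMk Φ, InducedCategory.hom_ext hfac⟩


noncomputable def homotopyOfInjective {X : B A} (hI : Injective X) :
    Homotopy (𝟙 X.obj) 0 := by
  haveI := hI
  have hb : IsBoundedComplex (CochainComplex.mappingCone (𝟙 X.obj)) := by
    obtain ⟨a, b, hab⟩ := X.property
    refine ⟨a - 1, b, fun n hn => ?_⟩
    refine IsZero.of_iso ?_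
      (homotopyCofiber.XIsoBiprod (𝟙 X.obj) n (n + 1) (by simp))
    rw [biprod_isZero_iff]
    exact ⟨hab _ (by omega), hab _ (by omega)⟩
  let Cn : B A := ⟨CochainComplex.mappingCone (𝟙 X.obj), hb⟩
  let ι : X ⟶ Cn := ObjectProperty.homMk (CochainComplex.mappingCone.inr (𝟙 X.obj))
  haveI : Mono ι := by
    apply mono_sub
    apply HomologicalComplex.mono_of_mono_f
    intro n
    have hsplit : (CochainComplex.mappingCone.inr (𝟙 X.obj)).f n ≫
        homotopyCofiber.sndX (𝟙 X.obj) n = 𝟙 _ := by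
      exact homotopyCofiber.inrX_sndX (𝟙 X.obj) n
    exact mono_of_mono_fac hsplit
  let r : Cn ⟶ X := Injective.factorThru (𝟙 X) ι
  have hr : ι ≫ r = 𝟙 X := Injective.comp_factorThru _ _
  have hr' : ι.hom ≫
      r.hom = 𝟙 X.obj := congrArg InducedCategory.Hom.hom hr
  let H := CochainComplex.mappingCone.homotopyToZeroOfId X.obj
  refine (Homotopy.ofEq hr'.symm).trans ?_
  refine Homotopy.trans ?_ (Homotopy.ofEq (by simp :
    (ι.hom ≫ (0 : CochainComplex.mappingCone (𝟙 X.obj) ⟶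
      CochainComplex.mappingCone (𝟙 X.obj)) ≫ r.hom) = 0))
  have := ((H.compLeft ι.hom).compRight r.hom)
  simpa using this

end Stmt6Aux

/-- A bounded cochain complex `X` of `A`-modules is an injective object in the category
`C^b(Mod A)` of bounded cochain complexes iff `X` is contractible and each term is injective. -/
theorem stmt6 (A : Type) [Ring A]
    (X : ObjectProperty.FullSubcategory (IsBoundedComplex (A := A))) :
    Injective X ↔
      (Nonempty (Homotopy (𝟙 X.obj) 0) ∧ ∀ n : ℤ, Injective (X.obj.X n)) := by
  constructor
  · intro hI
    exact ⟨⟨Stmt6Aux.homotopyOfInjective hI⟩, fun n => Stmt6Aux.injective_term hI n⟩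
  · rintro ⟨⟨h⟩, hX⟩
    exact Stmt6Aux.injective_of_contractible h hX
end
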